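/- arXiv:1505.03789 — 3 statements merged into one kernel-verified Lean document; each statement's English description precedes it below -/
import Mathlib

section
/- For a random variable Q with density p(Q) = δ^{-1} Q^{M-1} g(Q) on (0,∞), where g is positive and differentiable, the expectation E[Q φ(Q)^2] with φ(Q) = -g'(Q)/g(Q) satisfies: if E[Q^{-1}] = ∞ then E[Q φ(Q)^2] = ∞. -/
open MeasureTheory Real Set Filter

lemma amgm_aux (u q x c : ℝ) (hq : 0 ≤ q) (hx : 0 < x) (hc : 0 < c) :
    |u| * q ≤ (c⁻¹ * (x * u^2 * q) + c * (x⁻¹ * q)) / 2 := by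
  have h2 : 0 ≤ q * (x * |u| - c)^2 := by positivity
  have heq : c⁻¹ * (x * u^2 * q) + c * (x⁻¹ * q) = (x^2*u^2*q + c^2*q)/(x*c) := by
    field_simp
  have h3 : q * (x * |u| - c)^2 = x^2*u^2*q + c^2*q - 2*(x*c)*(abs u * q) := by
    rw [← sq_abs u]; ring
  rw [heq, div_div, le_div_iff₀ (by positivity)]
  linarith

/-- If the density `p Q = δ⁻¹ Q^(M-1) g Q` on `(0,∞)` satisfies `E[Q⁻¹] = ∞`,
then `E[Q φ(Q)²] = ∞`, where `φ = -g'/g`. -/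
theorem unbounded_fisher_of_unbounded_inv_moment
    (M : ℕ) (hM : 2 ≤ M) (g : ℝ → ℝ)
    (hg_pos : ∀ Q ∈ Ioi (0 : ℝ), 0 < g Q)
    (hg_diff : ∀ Q ∈ Ioi (0 : ℝ), DifferentiableAt ℝ g Q)
    (δ : ℝ) (hδ : δ = ∫ t in Ioi (0 : ℝ), t ^ (M - 1) * g t)
    (hδ_fin : IntegrableOn (fun t => t ^ (M - 1) * g t) (Ioi 0))
    (p φ : ℝ → ℝ)
    (hp : ∀ Q, p Q = δ⁻¹ * Q ^ (M - 1) * g Q)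
    (hφ : ∀ Q, φ Q = -(deriv g Q) / g Q)
    (hp_top : Tendsto p atTop (nhds 0))
    (hdiv : ¬ IntegrableOn (fun Q => Q⁻¹ * p Q) (Ioi 0)) :
    ¬ IntegrableOn (fun Q => Q * φ Q ^ 2 * p Q) (Ioi 0) := by
  intro h
  apply hdiv
  obtain ⟨n, rfl⟩ : ∃ n, M = n + 2 := ⟨M - 2, by omega⟩
  -- positivity of δ
  have hδpos : 0 < δ := by
    rw [hδ]
    rw [setIntegral_pos_iff_support_of_nonneg_ae ?_ hδ_fin]
    · refine lt_of_lt_of_le ?_ (measure_mono (show Ioi (0:ℝ) ⊆ _ from ?_))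
      · simp [Real.volume_Ioi]
      · intro t ht
        refine ⟨?_, ht⟩
        have := hg_pos t ht
        have ht0 : (0:ℝ) < t := ht
        simp only [Function.mem_support]
        positivity
    · filter_upwards [ae_restrict_mem measurableSet_Ioi] with t ht
      have ht0 : (0:ℝ) < t := ht
      have := hg_pos t ht
      positivity
  have hδinv : 0 < δ⁻¹ := inv_pos.2 hδpos
  have hpfun : p = fun Q => δ⁻¹ * Q ^ (n+1) * g Q := funext hp
  have hφfun : φ = fun Q => -(deriv g Q) / g Q := funext hφ
  have hgc : ContinuousOn g (Ioi 0) := fun x hx =>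
    (hg_diff x hx).continuousAt.continuousWithinAt
  have hp_cont : ContinuousOn p (Ioi 0) := by
    rw [hpfun]
    exact ((continuous_const.mul (continuous_pow _)).continuousOn.mul hgc)
  have hp_nonneg : ∀ x ∈ Ioi (0:ℝ), 0 ≤ p x := by
    intro x hx
    have hx0 : (0:ℝ) < x := hx
    have := hg_pos x hx
    rw [hp]; positivity
  have hInt_p : IntegrableOn p (Ioi 0) := by
    have h2 := hδ_fin.const_mul δ⁻¹
    rw [hpfun]
    simpa [mul_assoc, IntegrableOn] using h2
  have hf_cont : ContinuousOn (fun x : ℝ => x⁻¹ * p x) (Ioi 0) :=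
    (continuousOn_inv₀.mono (fun x hx => ne_of_gt hx)).mul hp_cont
  -- integrable on Ioi 1
  have hInt1 : IntegrableOn (fun x : ℝ => x⁻¹ * p x) (Ioi 1) := by
    refine Integrable.mono (hInt_p.mono_set (Ioi_subset_Ioi zero_le_one))
      ((hf_cont.mono (Ioi_subset_Ioi zero_le_one)).aestronglyMeasurable measurableSet_Ioi) ?_
    filter_upwards [ae_restrict_mem measurableSet_Ioi] with x hx
    have hx1 : (1:ℝ) < x := hx
    have hx0 : (0:ℝ) < x := lt_trans zero_lt_one hx1
    have hpx := hp_nonneg x hx0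
    rw [Real.norm_eq_abs, Real.norm_eq_abs, abs_of_nonneg hpx,
      abs_of_nonneg (mul_nonneg (inv_nonneg.2 hx0.le) hpx)]
    calc x⁻¹ * p x ≤ 1 * p x := by
          apply mul_le_mul_of_nonneg_right _ hpx
          exact inv_le_one_of_one_le₀ hx1.le
      _ = p x := one_mul _
  have hc : (0:ℝ) < (n:ℝ) + 1 := by positivity
  have hc1 : (1:ℝ) ≤ (n:ℝ) + 1 := by
    linarith [Nat.cast_nonneg (α := ℝ) n]
  have hA0 : 0 ≤ ∫ x in Ioi (0:ℝ), x * φ x ^ 2 * p x := by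
    apply setIntegral_nonneg measurableSet_Ioi
    intro x hx
    have hx0 : (0:ℝ) < x := hx
    exact mul_nonneg (mul_nonneg hx0.le (sq_nonneg _)) (hp_nonneg x hx)
  have hp1 : 0 ≤ p 1 := hp_nonneg 1 (by norm_num)
  -- key uniform bound
  have key : ∀ a : ℝ, 0 < a → a < 1 → (∫ x in Ioc a 1, ‖x⁻¹ * p x‖)
      ≤ 2 * p 1 + ∫ x in Ioi (0:ℝ), x * φ x ^ 2 * p x := by
    intro a ha ha1
    have hIocI : Ioc a 1 ⊆ Ioi (0:ℝ) := fun x hx => lt_trans ha hx.1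
    have hIccI : Icc a 1 ⊆ Ioi (0:ℝ) := fun x hx => lt_of_lt_of_le ha hx.1
    have hfi : IntegrableOn (fun x : ℝ => x⁻¹ * p x) (Ioc a 1) :=
      ((hf_cont.mono hIccI).integrableOn_Icc).mono_set Ioc_subset_Icc_self
    have hQphi : IntegrableOn (fun x => x * φ x^2 * p x) (Ioc a 1) := h.mono_set hIocI
    have hφp_meas : AEStronglyMeasurable (fun x => φ x * p x) (volume.restrict (Ioc a 1)) := by
      rw [hφfun]
      have h1 : AEMeasurable (deriv g) (volume.restrict (Ioc a 1)) :=
        (measurable_deriv g).aemeasurable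
      have h2 : AEMeasurable g (volume.restrict (Ioc a 1)) :=
        ((hgc.mono hIocI).aemeasurable measurableSet_Ioc)
      have h3 : AEMeasurable p (volume.restrict (Ioc a 1)) :=
        ((hp_cont.mono hIocI).aemeasurable measurableSet_Ioc)
      exact ((h1.neg.div h2).mul h3).aestronglyMeasurable
    have hm_int : IntegrableOn
        (fun x => (((n:ℝ)+1)⁻¹ * (x * φ x^2 * p x) + ((n:ℝ)+1) * (x⁻¹ * p x)) / 2)
        (Ioc a 1) :=
      ((hQphi.const_mul _).add (hfi.const_mul _)).div_const 2
    have hbound : ∀ x ∈ Ioc a 1, |φ x * p x|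
        ≤ (((n:ℝ)+1)⁻¹ * (x * φ x^2 * p x) + ((n:ℝ)+1) * (x⁻¹ * p x)) / 2 := by
      intro x hx
      have hx0 : (0:ℝ) < x := hIocI hx
      have hq := hp_nonneg x hx0
      have := amgm_aux (φ x) (p x) x ((n:ℝ)+1) hq hx0 hc
      rw [abs_mul, abs_of_nonneg hq]
      exact this
    have hφp_int : IntegrableOn (fun x => φ x * p x) (Ioc a 1) := by
      refine Integrable.mono hm_int hφp_meas ?_
      filter_upwards [ae_restrict_mem measurableSet_Ioc] with x hx
      rw [Real.norm_eq_abs, Real.norm_eq_abs]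
      exact le_trans (hbound x hx) (le_abs_self _)
    -- FTC
    have hderiv : ∀ x ∈ uIcc a 1,
        HasDerivAt p (((n:ℝ)+1) * (x⁻¹ * p x) - φ x * p x) x := by
      intro x hx
      rw [uIcc_of_le ha1.le] at hx
      have hx0 : (0:ℝ) < x := hIccI hx
      have hgx : g x ≠ 0 := ne_of_gt (hg_pos x hx0)
      have hpow : HasDerivAt (fun Q : ℝ => Q^(n+1)) (((n:ℝ)+1) * x^n) x := by
        simpa using hasDerivAt_pow (n+1) x
      have hd := (hpow.mul (hg_diff x hx0).hasDerivAt).const_mul δ⁻¹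
      have heqf : (fun Q : ℝ => δ⁻¹ * (Q^(n+1) * g Q)) = p := by
        rw [hpfun]; funext Q; ring
      simp only [Pi.mul_apply] at hd
      rw [heqf] at hd
      refine hd.congr_deriv ?_
      rw [hp, hφ, show n + 2 - 1 = n + 1 by omega]
      have hxne : x ≠ 0 := ne_of_gt hx0
      field_simp
      ring
    have hint : IntervalIntegrable
        (fun x => ((n:ℝ)+1) * (x⁻¹ * p x) - φ x * p x) volume a 1 := by
      rw [intervalIntegrable_iff_integrableOn_Ioc_of_le ha1.le]
      exact (hfi.const_mul _).sub hφp_int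
    have hFTC := intervalIntegral.integral_eq_sub_of_hasDerivAt hderiv hint
    have hsplit : ((n:ℝ)+1) * (∫ x in Ioc a 1, x⁻¹ * p x)
        - (∫ x in Ioc a 1, φ x * p x) = p 1 - p a := by
      rw [← hFTC, intervalIntegral.integral_of_le ha1.le,
        integral_sub (hfi.const_mul _) hφp_int, integral_const_mul]
    have hI0 : 0 ≤ ∫ x in Ioc a 1, x⁻¹ * p x := by
      apply setIntegral_nonneg measurableSet_Ioc
      intro x hx
      have hx0 : (0:ℝ) < x := hIocI hx
      exact mul_nonneg (inv_nonneg.2 hx0.le) (hp_nonneg x hx0)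
    have hJle : (∫ x in Ioc a 1, φ x * p x)
        ≤ (((n:ℝ)+1)⁻¹ * (∫ x in Ioi (0:ℝ), x * φ x ^ 2 * p x)
          + ((n:ℝ)+1) * (∫ x in Ioc a 1, x⁻¹ * p x)) / 2 := by
      have h1 : (∫ x in Ioc a 1, φ x * p x)
          ≤ ∫ x in Ioc a 1,
            ((((n:ℝ)+1)⁻¹ * (x * φ x^2 * p x) + ((n:ℝ)+1) * (x⁻¹ * p x)) / 2) := by
        refine integral_mono_ae hφp_int hm_int ?_
        filter_upwards [ae_restrict_mem measurableSet_Ioc] with x hx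
        exact le_trans (le_abs_self _) (hbound x hx)
      have h2 : (∫ x in Ioc a 1,
            ((((n:ℝ)+1)⁻¹ * (x * φ x^2 * p x) + ((n:ℝ)+1) * (x⁻¹ * p x)) / 2))
          = (((n:ℝ)+1)⁻¹ * (∫ x in Ioc a 1, x * φ x^2 * p x)
            + ((n:ℝ)+1) * (∫ x in Ioc a 1, x⁻¹ * p x)) / 2 := by
        rw [integral_div, integral_add (hQphi.const_mul _) (hfi.const_mul _),
          integral_const_mul, integral_const_mul]
      have h3 : (∫ x in Ioc a 1, x * φ x^2 * p x)
          ≤ ∫ x in Ioi (0:ℝ), x * φ x ^ 2 * p x := by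
        refine setIntegral_mono_set h ?_ (HasSubset.Subset.eventuallyLE hIocI)
        filter_upwards [ae_restrict_mem measurableSet_Ioi] with x hx
        have hx0 : (0:ℝ) < x := hx
        exact mul_nonneg (mul_nonneg hx0.le (sq_nonneg _)) (hp_nonneg x hx)
      have h4 : ((n:ℝ)+1)⁻¹ * (∫ x in Ioc a 1, x * φ x^2 * p x)
          ≤ ((n:ℝ)+1)⁻¹ * (∫ x in Ioi (0:ℝ), x * φ x ^ 2 * p x) :=
        mul_le_mul_of_nonneg_left h3 (inv_nonneg.2 hc.le)
      linarith
    have hpa : 0 ≤ p a := hp_nonneg a ha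
    have hcA : ((n:ℝ)+1)⁻¹ * (∫ x in Ioi (0:ℝ), x * φ x ^ 2 * p x)
        ≤ ∫ x in Ioi (0:ℝ), x * φ x ^ 2 * p x :=
      mul_le_of_le_one_left hA0 (inv_le_one_of_one_le₀ hc1)
    have hII : (∫ x in Ioc a 1, x⁻¹ * p x)
        ≤ ((n:ℝ)+1) * (∫ x in Ioc a 1, x⁻¹ * p x) :=
      le_mul_of_one_le_left hI0 hc1
    have hnorm : (∫ x in Ioc a 1, ‖x⁻¹ * p x‖) = ∫ x in Ioc a 1, x⁻¹ * p x := by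
      refine setIntegral_congr_fun measurableSet_Ioc ?_
      intro x hx
      have hx0 : (0:ℝ) < x := hIocI hx
      simp only [Real.norm_eq_abs]
      exact abs_of_nonneg (mul_nonneg (inv_nonneg.2 hx0.le) (hp_nonneg x hx0))
    rw [hnorm]
    linarith
  -- integrable on Ioc 0 1
  have hInt0 : IntegrableOn (fun x : ℝ => x⁻¹ * p x) (Ioc 0 1) := by
    have hseq : ∀ k : ℕ, 0 < ((k:ℝ)+2)⁻¹ ∧ ((k:ℝ)+2)⁻¹ < 1 := by
      intro k
      constructor
      · positivity
      · rw [inv_lt_one_iff₀]; right; linarith [Nat.cast_nonneg (α := ℝ) k]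
    refine integrableOn_Ioc_of_intervalIntegral_norm_bounded_left
      (f := fun x : ℝ => x⁻¹ * p x) (I := 2 * p 1 + ∫ x in Ioi (0:ℝ), x * φ x ^ 2 * p x)
      (a := fun k : ℕ => ((k:ℝ)+2)⁻¹) (b := 1) (l := atTop) ?_ ?_ ?_
    · intro k
      have hIccI : Icc (((k:ℝ)+2)⁻¹) 1 ⊆ Ioi (0:ℝ) :=
        fun x hx => lt_of_lt_of_le (hseq k).1 hx.1
      exact ((hf_cont.mono hIccI).integrableOn_Icc).mono_set Ioc_subset_Icc_self
    · exact tendsto_inv_atTop_zero.comp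
        (tendsto_atTop_add_const_right _ 2 tendsto_natCast_atTop_atTop)
    · filter_upwards with k
      exact key _ (hseq k).1 (hseq k).2
  have hfin := hInt0.union hInt1
  rwa [Ioc_union_Ioi_eq_Ioi zero_le_one] at hfin
end

section
/- For a real number a > 1 and all z > 0, K_a(z)/K_{a-1}(z) > ((a-1)/a)^{1/2} + (a-1)/z, where K_a is the modified Bessel function of the second kind. -/
open Real Set MeasureTheory Filter Asymptotics

/-- The modified Bessel function of the second kind, via its integral representation. -/
noncomputable def besselK (ν z : ℝ) : ℝ :=
  ∫ t in Ioi (0 : ℝ), Real.exp (-z * Real.cosh t) * Real.cosh (ν * t)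

lemma half_exp_le_cosh (t : ℝ) : Real.exp t / 2 ≤ Real.cosh t := by
  rw [Real.cosh_eq]
  have := Real.exp_pos (-t)
  linarith

lemma cosh_le_exp_of_nonneg {t : ℝ} (ht : 0 ≤ t) : Real.cosh t ≤ Real.exp t := by
  rw [Real.cosh_eq]
  have h1 : Real.exp (-t) ≤ Real.exp t := Real.exp_le_exp.2 (by linarith)
  linarith

lemma abs_sinh_le_exp_of_nonneg {t : ℝ} (ht : 0 ≤ t) : |Real.sinh t| ≤ Real.exp t := by
  rw [Real.abs_sinh, abs_of_nonneg ht]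
  calc Real.sinh t ≤ Real.cosh t := by
        rw [Real.sinh_eq, Real.cosh_eq]; have := Real.exp_pos (-t); linarith
    _ ≤ Real.exp t := cosh_le_exp_of_nonneg ht

lemma tendsto_aux (z c : ℝ) (hz : 0 < z) :
    Tendsto (fun t => c * t - z * Real.cosh t) atTop atBot := by
  have key : ∀ᶠ t in atTop, c * t - z * Real.cosh t ≤ -(z / 4) * Real.exp t := by
    have hlo : (fun t : ℝ => c * t) =o[atTop] Real.exp := by
      simpa using (Real.isLittleO_pow_exp_atTop (n := 1)).const_mul_left c
    filter_upwards [hlo.def (show (0:ℝ) < z/4 by linarith), eventually_ge_atTop (0:ℝ)]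
      with t hb ht
    have h1 : Real.exp t / 2 ≤ Real.cosh t := half_exp_le_cosh t
    have h2 : c * t ≤ (z/4) * Real.exp t := by
      have := hb
      rw [Real.norm_eq_abs, Real.norm_eq_abs, abs_of_nonneg (Real.exp_pos t).le] at this
      calc c * t ≤ |c * t| := le_abs_self _
        _ ≤ (z/4) * Real.exp t := this
    nlinarith [Real.exp_pos t, hz]
  refine tendsto_atBot_mono' _ key ?_
  have : Tendsto (fun t : ℝ => -(z/4) * Real.exp t) atTop atBot :=
    (Real.tendsto_exp_atTop.const_mul_atTop_of_neg (by linarith)).mono_right le_rfl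
  exact this

lemma exp_tendsto_aux (z c : ℝ) (hz : 0 < z) :
    Tendsto (fun t => Real.exp (c * t - z * Real.cosh t)) atTop (nhds 0) :=
  Real.tendsto_exp_atBot.comp (tendsto_aux z c hz)

lemma integrableOn_aux (z c C : ℝ) (hz : 0 < z) (g : ℝ → ℝ) (hgc : Continuous g)
    (hg : ∀ t, 0 ≤ t → |g t| ≤ C * Real.exp (c * t)) :
    IntegrableOn (fun t => Real.exp (-z * Real.cosh t) * g t) (Ioi 0) := by
  refine integrable_of_isBigO_exp_neg (b := 1) one_pos
    (((Real.continuous_exp.comp ((continuous_const.mul Real.continuous_cosh))).mul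
      hgc).continuousOn) ?_
  have hev : ∀ᶠ t in atTop, Real.exp ((c + 1) * t - z * Real.cosh t) ≤ 1 := by
    have := (exp_tendsto_aux z (c + 1) hz).eventually_le_const (show (0:ℝ) < 1 by norm_num)
    filter_upwards [this] with t ht using ht
  refine IsBigO.of_bound (max C 0) ?_
  filter_upwards [hev, eventually_ge_atTop (0:ℝ)] with t hb ht
  rw [Real.norm_eq_abs, Real.norm_eq_abs, abs_of_nonneg (Real.exp_pos _).le, abs_mul,
    abs_of_nonneg (Real.exp_pos _).le]
  have h1 : |g t| ≤ C * Real.exp (c * t) := hg t ht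
  have hC : C ≤ max C 0 := le_max_left _ _
  calc Real.exp (-z * Real.cosh t) * |g t|
      ≤ Real.exp (-z * Real.cosh t) * (C * Real.exp (c * t)) := by
        exact mul_le_mul_of_nonneg_left h1 (Real.exp_pos _).le
    _ = C * (Real.exp ((c + 1) * t - z * Real.cosh t) * Real.exp (-t)) := by
        rw [← Real.exp_add, show (c + 1) * t - z * Real.cosh t + -t
          = -z * Real.cosh t + c * t from by ring, Real.exp_add]
        ring
    _ ≤ max C 0 * (Real.exp ((c + 1) * t - z * Real.cosh t) * Real.exp (-t)) := by
        exact mul_le_mul_of_nonneg_right hC (by positivity)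
    _ ≤ max C 0 * (1 * Real.exp (-t)) := by
        refine mul_le_mul_of_nonneg_left ?_ (le_max_right _ _)
        exact mul_le_mul_of_nonneg_right hb (Real.exp_pos _).le
    _ = max C 0 * Real.exp (-1 * t) := by ring_nf

lemma integrableOn_cosh (z b : ℝ) (hz : 0 < z) :
    IntegrableOn (fun t => Real.exp (-z * Real.cosh t) * Real.cosh (b * t)) (Ioi 0) := by
  refine integrableOn_aux z |b| 1 hz _ (Real.continuous_cosh.comp (continuous_const.mul
    continuous_id)) fun t ht => ?_
  rw [abs_of_nonneg (Real.cosh_pos _).le, one_mul]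
  calc Real.cosh (b * t) = Real.cosh |b * t| := (Real.cosh_abs _).symm
    _ ≤ Real.exp |b * t| := cosh_le_exp_of_nonneg (abs_nonneg _)
    _ = Real.exp (|b| * t) := by rw [abs_mul, abs_of_nonneg ht]

lemma integrableOn_sinh_sinh (z b : ℝ) (hz : 0 < z) :
    IntegrableOn (fun t => Real.exp (-z * Real.cosh t) * (Real.sinh t * Real.sinh (b * t)))
      (Ioi 0) := by
  refine integrableOn_aux z (1 + |b|) 1 hz _
    (Real.continuous_sinh.mul (Real.continuous_sinh.comp (continuous_const.mul
      continuous_id))) fun t ht => ?_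
  rw [abs_mul, one_mul]
  calc |Real.sinh t| * |Real.sinh (b * t)| ≤ Real.exp t * Real.exp (|b| * t) := by
        refine mul_le_mul (abs_sinh_le_exp_of_nonneg ht) ?_ (abs_nonneg _) (Real.exp_pos _).le
        rw [Real.abs_sinh]
        calc Real.sinh |b * t| ≤ Real.exp |b * t| := by
              have := abs_sinh_le_exp_of_nonneg (abs_nonneg (b * t))
              rw [Real.abs_sinh, abs_abs] at this; exact this
          _ = Real.exp (|b| * t) := by rw [abs_mul, abs_of_nonneg ht]
    _ = Real.exp ((1 + |b|) * t) := by rw [← Real.exp_add]; ring_nf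

/-- Integration by parts: `ν K_ν(z) = z ∫ e^{-z cosh t} sinh t sinh (ν t)`. -/
lemma besselK_ibp (ν z : ℝ) (hz : 0 < z) :
    ν * besselK ν z
      = z * ∫ t in Ioi (0:ℝ), Real.exp (-z * Real.cosh t) * (Real.sinh t * Real.sinh (ν * t)) := by
  set F : ℝ → ℝ := fun t => Real.exp (-z * Real.cosh t) * Real.sinh (ν * t) with hF
  set F' : ℝ → ℝ := fun t =>
    ν * (Real.exp (-z * Real.cosh t) * Real.cosh (ν * t))
      - z * (Real.exp (-z * Real.cosh t) * (Real.sinh t * Real.sinh (ν * t))) with hF'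
  have hderiv : ∀ t : ℝ, HasDerivAt F (F' t) t := by
    intro t
    have h1 : HasDerivAt (fun t => Real.exp (-z * Real.cosh t))
        (Real.exp (-z * Real.cosh t) * (-z * Real.sinh t)) t := by
      have := ((Real.hasDerivAt_cosh t).const_mul (-z)).exp
      simpa [mul_comm] using this
    have h2 : HasDerivAt (fun t => Real.sinh (ν * t)) (Real.cosh (ν * t) * ν) t := by
      have hid : HasDerivAt (fun t : ℝ => ν * t) ν t := by
        simpa using (hasDerivAt_id t).const_mul ν
      exact (Real.hasDerivAt_sinh (ν * t)).comp t hid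
    have := h1.mul h2
    refine this.congr_deriv ?_
    simp only [hF']
    ring
  have hint : IntegrableOn F' (Ioi 0) :=
    ((integrableOn_cosh z ν hz).const_mul ν).sub ((integrableOn_sinh_sinh z ν hz).const_mul z)
  have htend : Tendsto F atTop (nhds 0) := by
    refine squeeze_zero_norm' (a := fun t => Real.exp ((|ν| + 1) * t - z * Real.cosh t))
      ?_ (exp_tendsto_aux z (|ν| + 1) hz)
    filter_upwards [Filter.eventually_ge_atTop (0:ℝ)] with t ht
    rw [hF, Real.norm_eq_abs, abs_mul, abs_of_nonneg (Real.exp_pos _).le]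
    calc Real.exp (-z * Real.cosh t) * |Real.sinh (ν * t)|
        ≤ Real.exp (-z * Real.cosh t) * Real.exp (|ν| * |t|) := by
          refine mul_le_mul_of_nonneg_left ?_ (Real.exp_pos _).le
          rw [Real.abs_sinh]
          have := abs_sinh_le_exp_of_nonneg (abs_nonneg (ν * t))
          rw [Real.abs_sinh, abs_abs] at this
          calc Real.sinh |ν * t| ≤ Real.exp |ν * t| := this
            _ = Real.exp (|ν| * |t|) := by rw [abs_mul]
      _ ≤ Real.exp ((|ν| + 1) * t - z * Real.cosh t) := by
          rw [← Real.exp_add]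
          apply Real.exp_le_exp.2
          rw [abs_of_nonneg ht]
          nlinarith [abs_nonneg ν]
  have hibp : ∫ t in Ioi (0:ℝ), F' t = 0 - F 0 :=
    integral_Ioi_of_hasDerivAt_of_tendsto (hderiv 0).continuousAt.continuousWithinAt
      (fun x _ => hderiv x) hint htend
  have hF0 : F 0 = 0 := by simp [hF]
  rw [hF0, sub_zero] at hibp
  have hsplit : ∫ t in Ioi (0:ℝ), F' t
      = ν * besselK ν z
        - z * ∫ t in Ioi (0:ℝ), Real.exp (-z * Real.cosh t)
            * (Real.sinh t * Real.sinh (ν * t)) := by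
    rw [hF']
    rw [MeasureTheory.integral_sub ((integrableOn_cosh z ν hz).const_mul ν)
      ((integrableOn_sinh_sinh z ν hz).const_mul z),
      MeasureTheory.integral_const_mul, MeasureTheory.integral_const_mul]
    rfl
  rw [hsplit] at hibp
  linarith

lemma besselK_pos (ν z : ℝ) (hz : 0 < z) : 0 < besselK ν z := by
  rw [besselK]
  rw [setIntegral_pos_iff_support_of_nonneg_ae]
  · refine lt_of_lt_of_le ?_ (measure_mono (show Ioi 1 ⊆ Function.support
        (fun t => Real.exp (-z * Real.cosh t) * Real.cosh (ν * t)) ∩ Ioi 0 from ?_))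
    · simp [Real.volume_Ioi]
    · intro t ht
      refine ⟨?_, mem_Ioi.2 (lt_trans one_pos (mem_Ioi.1 ht))⟩
      exact (mul_pos (Real.exp_pos _) (Real.cosh_pos _)).ne'
  · filter_upwards with t
    exact (mul_pos (Real.exp_pos _) (Real.cosh_pos _)).le
  · exact integrableOn_cosh z ν hz

/-- The key strict inequality `z K_a(z) > (z + a - 1) K_{a-1}(z)`. -/
lemma besselK_key (a z : ℝ) (ha : 1 < a) (hz : 0 < z) :
    (z + (a - 1)) * besselK (a - 1) z < z * besselK a z := by
  set ν := a - 1 with hν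
  have hνpos : 0 < ν := by simp [hν]; linarith
  have hibp := besselK_ibp ν z hz
  -- the difference integrand
  have hdiff : ∀ t : ℝ,
      Real.exp (-z * Real.cosh t) * Real.cosh (a * t)
        - Real.exp (-z * Real.cosh t) * Real.cosh (ν * t)
        - Real.exp (-z * Real.cosh t) * (Real.sinh t * Real.sinh (ν * t))
      = Real.exp (-z * Real.cosh t) * (Real.cosh (ν * t) * (Real.cosh t - 1)) := by
    intro t
    have : a * t = ν * t + t := by rw [hν]; ring
    rw [this, Real.cosh_add]
    ring
  have hint1 := integrableOn_cosh z a hz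
  have hint2 := integrableOn_cosh z ν hz
  have hint3 := integrableOn_sinh_sinh z ν hz
  have hsub : IntegrableOn (fun t => Real.exp (-z * Real.cosh t) * Real.cosh (a * t)
      - Real.exp (-z * Real.cosh t) * Real.cosh (ν * t)
      - Real.exp (-z * Real.cosh t) * (Real.sinh t * Real.sinh (ν * t))) (Ioi 0) :=
    ((hint1.sub hint2).sub hint3 : _)
  have hintd : IntegrableOn
      (fun t => Real.exp (-z * Real.cosh t) * (Real.cosh (ν * t) * (Real.cosh t - 1)))
      (Ioi 0) :=
    IntegrableOn.congr_fun hsub (fun t _ => hdiff t) measurableSet_Ioi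
  have hpos : 0 < ∫ t in Ioi (0:ℝ),
      Real.exp (-z * Real.cosh t) * (Real.cosh (ν * t) * (Real.cosh t - 1)) := by
    rw [setIntegral_pos_iff_support_of_nonneg_ae]
    · refine lt_of_lt_of_le ?_ (measure_mono (show Ioi 1 ⊆ _ ∩ Ioi (0:ℝ) from ?_))
      · simp [Real.volume_Ioi]
      · intro t ht
        have ht0 : (0:ℝ) < t := lt_trans one_pos ht
        refine ⟨?_, ht0⟩
        have h1 : 1 < Real.cosh t := by
          rw [Real.one_lt_cosh]
          exact ht0.ne'
        exact (mul_pos (Real.exp_pos _) (mul_pos (Real.cosh_pos _) (by linarith))).ne'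
    · filter_upwards [ae_restrict_mem measurableSet_Ioi] with t ht
      have h1 : 1 ≤ Real.cosh t := Real.one_le_cosh t
      exact mul_nonneg (Real.exp_pos _).le
        (mul_nonneg (Real.cosh_pos _).le (by linarith))
    · exact hintd
  -- combine
  have e1 : ∫ t in Ioi (0:ℝ), (Real.exp (-z * Real.cosh t) * Real.cosh (a * t)
        - Real.exp (-z * Real.cosh t) * Real.cosh (ν * t)
        - Real.exp (-z * Real.cosh t) * (Real.sinh t * Real.sinh (ν * t)))
      = (∫ t in Ioi (0:ℝ), (Real.exp (-z * Real.cosh t) * Real.cosh (a * t)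
          - Real.exp (-z * Real.cosh t) * Real.cosh (ν * t)))
        - ∫ t in Ioi (0:ℝ), Real.exp (-z * Real.cosh t) * (Real.sinh t * Real.sinh (ν * t)) :=
    MeasureTheory.integral_sub (hint1.sub hint2) hint3
  have e2 : ∫ t in Ioi (0:ℝ), (Real.exp (-z * Real.cosh t) * Real.cosh (a * t)
        - Real.exp (-z * Real.cosh t) * Real.cosh (ν * t))
      = besselK a z - besselK ν z := MeasureTheory.integral_sub hint1 hint2
  have e3 : ∫ t in Ioi (0:ℝ),
        Real.exp (-z * Real.cosh t) * (Real.cosh (ν * t) * (Real.cosh t - 1))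
      = ∫ t in Ioi (0:ℝ), (Real.exp (-z * Real.cosh t) * Real.cosh (a * t)
        - Real.exp (-z * Real.cosh t) * Real.cosh (ν * t)
        - Real.exp (-z * Real.cosh t) * (Real.sinh t * Real.sinh (ν * t))) :=
    MeasureTheory.setIntegral_congr_fun measurableSet_Ioi fun t _ => (hdiff t).symm
  rw [e3, e1, e2] at hpos
  nlinarith [hpos, hibp, hz, mul_pos hz hpos]

/-- For `a > 1` and `z > 0`: `K_a(z)/K_{a-1}(z) > √((a-1)/a) + (a-1)/z`. -/
theorem besselK_ratio_lower_bound (a : ℝ) (ha : 1 < a) (z : ℝ) (hz : 0 < z) :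
    besselK a z / besselK (a - 1) z > Real.sqrt ((a - 1) / a) + (a - 1) / z := by
  have hK := besselK_pos (a - 1) z hz
  have hkey := besselK_key a z ha hz
  have h1 : 1 + (a - 1) / z < besselK a z / besselK (a - 1) z := by
    rw [lt_div_iff₀ hK, ← sub_pos]
    have hrw : besselK a z - (1 + (a - 1) / z) * besselK (a - 1) z
        = (z * besselK a z - (z + (a - 1)) * besselK (a - 1) z) / z := by
      field_simp
    rw [hrw]
    exact div_pos (by linarith) hz
  have h2 : Real.sqrt ((a - 1) / a) < 1 := by
    have := Real.sqrt_lt_sqrt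
      (div_nonneg (by linarith) (by linarith : (0:ℝ) ≤ a))
      (show (a - 1) / a < 1 by rw [div_lt_one (by linarith)]; linarith)
    simpa using this
  linarith
end

section
/- The integral I_μ = ∫_0^∞ z^{2μ+ν+M-3} K_{M+1-ν}(z)^2 / K_{M-ν}(z) dz converges if and only if μ + ν > 2, given M - ν > 0 and M + 1 - ν > 1. -/
open Real Set MeasureTheory

namespace BesselAux

lemma cosh_le_exp {t : ℝ} (ht : 0 ≤ t) : Real.cosh t ≤ Real.exp t := by
  rw [Real.cosh_eq]
  have h := Real.exp_le_exp.mpr (neg_le_self ht)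
  linarith

lemma exp_le_two_cosh (t : ℝ) : Real.exp t ≤ 2 * Real.cosh t := by
  rw [Real.cosh_eq]
  have := (Real.exp_pos (-t)).le
  linarith

lemma one_add_sq_half_le_cosh (t : ℝ) : 1 + t ^ 2 / 2 ≤ Real.cosh t := by
  rw [← Real.cosh_abs]
  have hs0 : 0 ≤ |t| := abs_nonneg t
  have h : Real.cosh |t| = 1 + 2 * Real.sinh (|t| / 2) ^ 2 := by
    have h1 := Real.cosh_two_mul (|t| / 2)
    have h2 := Real.cosh_sq (|t| / 2)
    rw [show 2 * (|t| / 2) = |t| by ring] at h1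
    rw [h1, h2]; ring
  have hsinh : |t| / 2 ≤ Real.sinh (|t| / 2) := Real.self_le_sinh_iff.mpr (by linarith)
  have ht2 : t ^ 2 = |t| ^ 2 := (sq_abs t).symm
  nlinarith [hsinh, hs0]

lemma image_mul_exp {c : ℝ} (hc : 0 < c) :
    (fun t => c * Real.exp t) '' (Ioi 0) = Ioi c := by
  ext u
  constructor
  · rintro ⟨t, ht, rfl⟩
    have h1 : 1 < Real.exp t := Real.one_lt_exp_iff.mpr ht
    have : c < c * Real.exp t := by nlinarith
    simpa using this
  · intro hu
    have hu0 : 0 < u := hc.trans hu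
    refine ⟨Real.log (u / c), ?_, ?_⟩
    · exact Real.log_pos ((one_lt_div hc).mpr hu)
    · simp only
      rw [Real.exp_log (by positivity)]
      field_simp
lemma hd (c : ℝ) : ∀ x ∈ Ioi (0:ℝ),
    HasDerivWithinAt (fun t => c * Real.exp t) (c * Real.exp x) (Ioi 0) x :=
  fun x _ => ((Real.hasDerivAt_exp x).const_mul c).hasDerivWithinAt

lemma hinj {c : ℝ} (hc : 0 < c) : InjOn (fun t => c * Real.exp t) (Ioi (0:ℝ)) :=
  fun a _ b _ h => Real.exp_injective (mul_left_cancel₀ hc.ne' h)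

lemma point_eq {c : ℝ} (hc : 0 < c) (a t : ℝ) :
    c ^ (-a) * (|c * Real.exp t| • (Real.exp (-(c * Real.exp t)) * (c * Real.exp t) ^ (a - 1)))
      = Real.exp (a * t) * Real.exp (-(c * Real.exp t)) := by
  have het : (0:ℝ) < c * Real.exp t := by positivity
  have hca : (0:ℝ) < c ^ a := Real.rpow_pos_of_pos hc a
  have h1 : (c * Real.exp t) ^ a = c ^ a * Real.exp (a * t) := by
    rw [Real.mul_rpow hc.le (Real.exp_pos t).le, Real.rpow_def_of_pos (Real.exp_pos t),
      Real.log_exp, mul_comm t a]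
  have h2 : c * Real.exp t * (c * Real.exp t) ^ (a - 1) = (c * Real.exp t) ^ a := by
    rw [show a = a - 1 + 1 by ring, Real.rpow_add_one het.ne']
    ring_nf
  rw [smul_eq_mul, abs_of_pos het]
  have key : c * Real.exp t * (Real.exp (-(c * Real.exp t)) * (c * Real.exp t) ^ (a - 1))
      = c ^ a * (Real.exp (a * t) * Real.exp (-(c * Real.exp t))) := by
    calc c * Real.exp t * (Real.exp (-(c * Real.exp t)) * (c * Real.exp t) ^ (a - 1))
        = (c * Real.exp t * (c * Real.exp t) ^ (a - 1)) * Real.exp (-(c * Real.exp t)) := by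
          ring
      _ = (c * Real.exp t) ^ a * Real.exp (-(c * Real.exp t)) := by rw [h2]
      _ = c ^ a * (Real.exp (a * t) * Real.exp (-(c * Real.exp t))) := by rw [h1]; ring
  rw [Real.rpow_neg hc.le, key, ← mul_assoc, inv_mul_cancel₀ hca.ne', one_mul]

lemma integrableOn_subst {c a : ℝ} (hc : 0 < c) (ha : 0 < a) :
    IntegrableOn (fun t => Real.exp (a * t) * Real.exp (-(c * Real.exp t))) (Ioi (0:ℝ)) := by
  have hG : IntegrableOn (fun u => Real.exp (-u) * u ^ (a - 1)) (Ioi c) :=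
    (Real.GammaIntegral_convergent ha).mono_set (Ioi_subset_Ioi hc.le)
  rw [← image_mul_exp hc] at hG
  have h := (integrableOn_image_iff_integrableOn_abs_deriv_smul measurableSet_Ioi (hd c)
    (hinj hc) _).mp hG
  have h2 := h.const_mul (c ^ (-a))
  exact IntegrableOn.congr_fun h2 (fun t _ => point_eq hc a t) measurableSet_Ioi

lemma integral_subst {c : ℝ} (hc : 0 < c) (a : ℝ) :
    ∫ t in Ioi (0:ℝ), Real.exp (a * t) * Real.exp (-(c * Real.exp t)) =
      c ^ (-a) * ∫ u in Ioi c, Real.exp (-u) * u ^ (a - 1) := by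
  have h := integral_image_eq_integral_abs_deriv_smul measurableSet_Ioi (hd c) (hinj hc)
      (fun u => Real.exp (-u) * u ^ (a - 1))
  rw [image_mul_exp hc] at h
  rw [h, ← integral_const_mul]
  exact (setIntegral_congr_fun measurableSet_Ioi (fun t _ => point_eq hc a t)).symm
/-- The tail of the Gamma integral. -/
noncomputable def T (a c : ℝ) : ℝ := ∫ u in Ioi c, Real.exp (-u) * u ^ (a - 1)

lemma tail_integrable {a c : ℝ} (ha : 0 < a) (hc : 0 < c) :
    IntegrableOn (fun u => Real.exp (-u) * u ^ (a - 1)) (Ioi c) :=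
  (Real.GammaIntegral_convergent ha).mono_set (Ioi_subset_Ioi hc.le)

lemma tail_antitone {a c c' : ℝ} (ha : 0 < a) (hc : 0 < c) (hcc : c ≤ c') : T a c' ≤ T a c := by
  apply setIntegral_mono_set (tail_integrable ha hc)
  · filter_upwards [ae_restrict_mem measurableSet_Ioi] with u hu
    have hu0 : 0 < u := hc.trans hu
    exact mul_nonneg (Real.exp_pos _).le (Real.rpow_nonneg hu0.le _)
  · exact HasSubset.Subset.eventuallyLE (Ioi_subset_Ioi hcc)

lemma tail_le_Gamma {a c : ℝ} (ha : 0 < a) (hc : 0 < c) : T a c ≤ Real.Gamma a := by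
  rw [Real.Gamma_eq_integral ha]
  apply setIntegral_mono_set (Real.GammaIntegral_convergent ha)
  · filter_upwards [ae_restrict_mem measurableSet_Ioi] with u hu
    have hu0 : 0 < u := hu
    exact mul_nonneg (Real.exp_pos _).le (Real.rpow_nonneg hu0.le _)
  · exact HasSubset.Subset.eventuallyLE (Ioi_subset_Ioi hc.le)

lemma point_lb {a z u : ℝ} (hz : 1 ≤ z) (hu : u ∈ Ioc z (z + 1)) :
    min 1 (2 ^ (a - 1)) * z ^ (a - 1) * Real.exp (-(z + 1)) ≤ Real.exp (-u) * u ^ (a - 1) := by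
  have hz0 : (0:ℝ) < z := lt_of_lt_of_le one_pos hz
  have hu0 : 0 < u := hz0.trans hu.1
  have he : Real.exp (-(z + 1)) ≤ Real.exp (-u) := Real.exp_le_exp.mpr (by linarith [hu.2])
  have hr : min 1 (2 ^ (a - 1)) * z ^ (a - 1) ≤ u ^ (a - 1) := by
    rcases le_or_gt 1 a with h1 | h1
    · calc min 1 (2 ^ (a - 1)) * z ^ (a - 1) ≤ 1 * z ^ (a - 1) :=
          mul_le_mul_of_nonneg_right (min_le_left _ _) (Real.rpow_nonneg hz0.le _)
        _ = z ^ (a - 1) := one_mul _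
        _ ≤ u ^ (a - 1) := Real.rpow_le_rpow hz0.le hu.1.le (by linarith)
    · have h2 : u ≤ 2 * z := by linarith [hu.2, hz]
      calc min 1 (2 ^ (a - 1)) * z ^ (a - 1) ≤ 2 ^ (a - 1) * z ^ (a - 1) :=
          mul_le_mul_of_nonneg_right (min_le_right _ _) (Real.rpow_nonneg hz0.le _)
        _ = (2 * z) ^ (a - 1) := (Real.mul_rpow (by norm_num) hz0.le).symm
        _ ≤ u ^ (a - 1) := Real.rpow_le_rpow_of_nonpos hu0 h2 (by linarith)
  calc min 1 (2 ^ (a - 1)) * z ^ (a - 1) * Real.exp (-(z + 1))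
      ≤ u ^ (a - 1) * Real.exp (-u) :=
        mul_le_mul hr he (Real.exp_pos _).le (Real.rpow_nonneg hu0.le _)
    _ = Real.exp (-u) * u ^ (a - 1) := mul_comm _ _

lemma tail_lb {a z : ℝ} (ha : 0 < a) (hz : 1 ≤ z) :
    min 1 (2 ^ (a - 1)) * z ^ (a - 1) * Real.exp (-(z + 1)) ≤ T a z := by
  have hz0 : (0:ℝ) < z := lt_of_lt_of_le one_pos hz
  have hsub : Ioc z (z + 1) ⊆ Ioi z := Ioc_subset_Ioi_self
  have hint : IntegrableOn (fun u => Real.exp (-u) * u ^ (a - 1)) (Ioc z (z + 1)) :=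
    (tail_integrable ha hz0).mono_set hsub
  have hvol : (volume (Ioc z (z + 1))).toReal = 1 := by
    rw [Real.volume_Ioc]; norm_num
  have key' : min 1 (2 ^ (a - 1)) * z ^ (a - 1) * Real.exp (-(z + 1)) *
      (volume (Ioc z (z + 1))).toReal ≤ ∫ u in Ioc z (z + 1), Real.exp (-u) * u ^ (a - 1) :=
    setIntegral_ge_of_const_le_real measurableSet_Ioc measure_Ioc_lt_top.ne
      (fun u hu => point_lb hz hu) hint
  rw [hvol, mul_one] at key'
  refine key'.trans ?_
  apply setIntegral_mono_set (tail_integrable ha hz0) _ (HasSubset.Subset.eventuallyLE hsub)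
  filter_upwards [ae_restrict_mem measurableSet_Ioi] with u hu
  have hu0 : 0 < u := hz0.trans hu
  exact mul_nonneg (Real.exp_pos _).le (Real.rpow_nonneg hu0.le _)

lemma tail_pos {a c : ℝ} (ha : 0 < a) (hc : 0 < c) : 0 < T a c := by
  have hmin : (0:ℝ) < min 1 (2 ^ (a - 1)) := lt_min one_pos (Real.rpow_pos_of_pos two_pos _)
  rcases le_or_gt c 1 with h1 | h1
  · have h4 := tail_lb (z := 1) ha le_rfl
    have h2 := tail_antitone ha hc h1
    have h3 : (0:ℝ) < min 1 (2 ^ (a - 1)) * (1:ℝ) ^ (a - 1) * Real.exp (-((1:ℝ) + 1)) := by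
      positivity
    linarith
  · have h4 := tail_lb ha h1.le
    have h3 : (0:ℝ) < min 1 (2 ^ (a - 1)) * c ^ (a - 1) * Real.exp (-(c + 1)) := by
      positivity
    linarith
lemma point_ub {a z t : ℝ} (ha : 0 < a) (hz : 0 < z) (ht : 0 < t) :
    Real.exp (-z * Real.cosh t) * Real.cosh (a * t)
      ≤ Real.exp (a * t) * Real.exp (-(z / 2 * Real.exp t)) := by
  have h1 : Real.cosh (a * t) ≤ Real.exp (a * t) := cosh_le_exp (by positivity)
  have h2 : Real.exp (-z * Real.cosh t) ≤ Real.exp (-(z / 2 * Real.exp t)) := by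
    apply Real.exp_le_exp.mpr
    nlinarith [exp_le_two_cosh t]
  calc Real.exp (-z * Real.cosh t) * Real.cosh (a * t)
      ≤ Real.exp (-(z / 2 * Real.exp t)) * Real.exp (a * t) :=
        mul_le_mul h2 h1 (Real.cosh_pos _).le (Real.exp_pos _).le
    _ = Real.exp (a * t) * Real.exp (-(z / 2 * Real.exp t)) := mul_comm _ _

lemma point_lb' {a z t : ℝ} (ha : 0 < a) (hz : 0 < z) (ht : 0 < t) :
    1 / 2 * (Real.exp (a * t) * Real.exp (-(z * Real.exp t)))
      ≤ Real.exp (-z * Real.cosh t) * Real.cosh (a * t) := by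
  have h1 : Real.exp (a * t) / 2 ≤ Real.cosh (a * t) := by
    have := exp_le_two_cosh (a * t); linarith
  have h2 : Real.exp (-(z * Real.exp t)) ≤ Real.exp (-z * Real.cosh t) := by
    apply Real.exp_le_exp.mpr
    have := cosh_le_exp ht.le
    nlinarith
  calc 1 / 2 * (Real.exp (a * t) * Real.exp (-(z * Real.exp t)))
      = Real.exp (-(z * Real.exp t)) * (Real.exp (a * t) / 2) := by ring
    _ ≤ Real.exp (-z * Real.cosh t) * Real.cosh (a * t) :=
        mul_le_mul h2 h1 (by positivity) (Real.exp_pos _).le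

lemma integrableOn_integrand {a z : ℝ} (ha : 0 < a) (hz : 0 < z) :
    IntegrableOn (fun t => Real.exp (-z * Real.cosh t) * Real.cosh (a * t)) (Ioi (0:ℝ)) := by
  apply Integrable.mono' (integrableOn_subst (half_pos hz) ha)
  · exact (Continuous.mul (by fun_prop) (by fun_prop)).aestronglyMeasurable
  · filter_upwards [ae_restrict_mem measurableSet_Ioi] with t ht
    rw [Real.norm_eq_abs, abs_of_pos (by positivity)]
    exact point_ub ha hz ht

lemma besselK_le {a z : ℝ} (ha : 0 < a) (hz : 0 < z) :
    besselK a z ≤ (z / 2) ^ (-a) * T a (z / 2) := by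
  rw [besselK, T, ← integral_subst (half_pos hz) a]
  apply setIntegral_mono_on (integrableOn_integrand ha hz)
    (integrableOn_subst (half_pos hz) ha) measurableSet_Ioi
  exact fun t ht => point_ub ha hz ht

lemma besselK_ge {a z : ℝ} (ha : 0 < a) (hz : 0 < z) :
    1 / 2 * (z ^ (-a) * T a z) ≤ besselK a z := by
  have h1 : 1 / 2 * (z ^ (-a) * T a z)
      = ∫ t in Ioi (0:ℝ), 1 / 2 * (Real.exp (a * t) * Real.exp (-(z * Real.exp t))) := by
    rw [T, integral_const_mul, integral_subst hz a]
  rw [besselK, h1]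
  apply setIntegral_mono_on ((integrableOn_subst hz ha).const_mul (1/2 : ℝ))
    (integrableOn_integrand ha hz) measurableSet_Ioi
  exact fun t ht => point_lb' ha hz ht

lemma besselK_pos {a z : ℝ} (ha : 0 < a) (hz : 0 < z) : 0 < besselK a z := by
  refine lt_of_lt_of_le ?_ (besselK_ge ha hz)
  have := tail_pos ha hz
  have := Real.rpow_pos_of_pos hz (-a)
  positivity

lemma besselK_nonneg {a z : ℝ} (ha : 0 < a) (hz : 0 < z) : 0 ≤ besselK a z :=
  (besselK_pos ha hz).le

lemma besselK_upper0 {a z : ℝ} (ha : 0 < a) (hz : 0 < z) :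
    besselK a z ≤ 2 ^ a * Real.Gamma a * z ^ (-a) := by
  have h1 := besselK_le ha hz
  have h2 : (z / 2 : ℝ) ^ (-a) = 2 ^ a * z ^ (-a) := by
    rw [Real.div_rpow hz.le (by norm_num), Real.rpow_neg (by norm_num : (0:ℝ) ≤ 2),
      div_inv_eq_mul, mul_comm]
  have h3 : T a (z / 2) ≤ Real.Gamma a := tail_le_Gamma ha (half_pos hz)
  have h4 : (0:ℝ) < (z / 2) ^ (-a) := Real.rpow_pos_of_pos (half_pos hz) _
  calc besselK a z ≤ (z / 2) ^ (-a) * T a (z / 2) := h1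
    _ ≤ (z / 2) ^ (-a) * Real.Gamma a := mul_le_mul_of_nonneg_left h3 h4.le
    _ = 2 ^ a * Real.Gamma a * z ^ (-a) := by rw [h2]; ring

lemma besselK_lower0 {a z : ℝ} (ha : 0 < a) (hz : 0 < z) (hz1 : z ≤ 1) :
    T a 1 / 2 * z ^ (-a) ≤ besselK a z := by
  refine le_trans ?_ (besselK_ge ha hz)
  have h1 : T a 1 ≤ T a z := tail_antitone ha hz hz1
  have h2 : (0:ℝ) ≤ z ^ (-a) := (Real.rpow_pos_of_pos hz _).le
  nlinarith
/-- Gaussian-type constant for the asymptotic upper bound. -/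
noncomputable def CB (b : ℝ) : ℝ := ∫ t in Ioi (0:ℝ), Real.exp (b * t - t ^ 2 / 2)

lemma integrableOn_gauss (b : ℝ) :
    IntegrableOn (fun t => Real.exp (b * t - t ^ 2 / 2)) (Ioi (0:ℝ)) := by
  have heq : (fun t : ℝ => Real.exp (b * t - t ^ 2 / 2))
      = fun t => Real.exp (b ^ 2 / 2) * Real.exp (-(1/2 : ℝ) * (t - b) ^ 2) := by
    funext t
    rw [← Real.exp_add]
    congr 1
    ring
  rw [heq]
  exact (((integrable_exp_neg_mul_sq (by norm_num : (0:ℝ) < 1/2)).comp_sub_right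
    b).const_mul _).integrableOn

lemma CB_nonneg (b : ℝ) : 0 ≤ CB b :=
  setIntegral_nonneg measurableSet_Ioi fun t _ => (Real.exp_pos _).le

lemma point_ub_exp {b z t : ℝ} (hb : 0 < b) (hz : 1 ≤ z) (ht : 0 < t) :
    Real.exp (-z * Real.cosh t) * Real.cosh (b * t)
      ≤ Real.exp (-z) * Real.exp (b * t - t ^ 2 / 2) := by
  have hz0 : (0:ℝ) < z := lt_of_lt_of_le one_pos hz
  have h1 : Real.cosh (b * t) ≤ Real.exp (b * t) := cosh_le_exp (by positivity)
  have h2 : Real.exp (-z * Real.cosh t) ≤ Real.exp (-z - t ^ 2 / 2) := by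
    apply Real.exp_le_exp.mpr
    have h3 := one_add_sq_half_le_cosh t
    nlinarith
  calc Real.exp (-z * Real.cosh t) * Real.cosh (b * t)
      ≤ Real.exp (-z - t ^ 2 / 2) * Real.exp (b * t) :=
        mul_le_mul h2 h1 (Real.cosh_pos _).le (Real.exp_pos _).le
    _ = Real.exp (-z) * Real.exp (b * t - t ^ 2 / 2) := by
        rw [← Real.exp_add, ← Real.exp_add]
        congr 1
        ring

lemma besselK_upper1 {b z : ℝ} (hb : 0 < b) (hz : 1 ≤ z) :
    besselK b z ≤ CB b * Real.exp (-z) := by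
  have hz0 : (0:ℝ) < z := lt_of_lt_of_le one_pos hz
  have h1 : besselK b z ≤ ∫ t in Ioi (0:ℝ), Real.exp (-z) * Real.exp (b * t - t ^ 2 / 2) := by
    rw [besselK]
    apply setIntegral_mono_on (integrableOn_integrand hb hz0)
      ((integrableOn_gauss b).const_mul _) measurableSet_Ioi
    exact fun t ht => point_ub_exp hb hz ht
  rw [integral_const_mul] at h1
  calc besselK b z ≤ Real.exp (-z) * CB b := h1
    _ = CB b * Real.exp (-z) := mul_comm _ _

lemma besselK_lower1 {a z : ℝ} (ha : 0 < a) (hz : 1 ≤ z) :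
    min 1 (2 ^ (a - 1)) * Real.exp (-1 : ℝ) / 2 * (z⁻¹ * Real.exp (-z)) ≤ besselK a z := by
  have hz0 : (0:ℝ) < z := lt_of_lt_of_le one_pos hz
  have hzz : z ^ (-a) * z ^ (a - 1) = z⁻¹ := by
    rw [← Real.rpow_add hz0, show -a + (a - 1) = -1 by ring, Real.rpow_neg_one]
  have he : Real.exp (-(z + 1)) = Real.exp (-1 : ℝ) * Real.exp (-z) := by
    rw [← Real.exp_add]; congr 1; ring
  have h1 := tail_lb ha hz
  have h2 := besselK_ge ha hz0
  have h3 : (0:ℝ) < z ^ (-a) := Real.rpow_pos_of_pos hz0 _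
  have key : min 1 (2 ^ (a - 1)) * Real.exp (-1 : ℝ) / 2 * (z⁻¹ * Real.exp (-z))
      = 1 / 2 * (z ^ (-a) * (min 1 (2 ^ (a - 1)) * z ^ (a - 1) * Real.exp (-(z + 1)))) := by
    rw [he, ← hzz]; ring
  rw [key]
  refine le_trans ?_ h2
  have := mul_le_mul_of_nonneg_left h1 h3.le
  nlinarith
lemma besselK_measurable (a : ℝ) : Measurable (besselK a) := by
  have hc : Continuous fun pr : ℝ × ℝ =>
      Real.exp (-pr.1 * Real.cosh pr.2) * Real.cosh (a * pr.2) := by fun_prop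
  have h : StronglyMeasurable fun z : ℝ => ∫ t, Real.exp (-z * Real.cosh t) * Real.cosh (a * t)
      ∂(volume.restrict (Ioi (0:ℝ))) := hc.stronglyMeasurable.integral_prod_right'
  unfold besselK
  exact h.measurable

lemma rpow_arith {z : ℝ} (hz : 0 < z) (p B A : ℝ) :
    z ^ p * (z ^ (-B)) ^ 2 / z ^ (-A) = z ^ (p - 2 * B + A) := by
  rw [sq, ← Real.rpow_add hz (-B) (-B), ← Real.rpow_add hz p (-B + -B), ← Real.rpow_sub hz]
  congr 1
  ring

end BesselAux
set_option maxHeartbeats 1000000 in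
open BesselAux in
/-- `I_μ = ∫_0^∞ z^(2μ+ν+M-3) K_{M+1-ν}(z)² / K_{M-ν}(z) dz` converges iff `μ + ν > 2`. -/
theorem I_mu_convergence (M : ℕ) (hM : 1 ≤ M) (ν : ℝ) (hν : 0 < ν) (hνM : ν < M) (μ : ℝ) :
    IntegrableOn
      (fun z => z ^ (2 * μ + ν + (M : ℝ) - 3) *
        (besselK ((M : ℝ) + 1 - ν) z) ^ 2 / besselK ((M : ℝ) - ν) z)
      (Ioi 0) ↔ μ + ν > 2 := by
  have hA0 : (0:ℝ) < (M : ℝ) - ν := by linarith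
  have hB0 : (0:ℝ) < (M : ℝ) + 1 - ν := by linarith
  set A := (M : ℝ) - ν with hA
  set B := (M : ℝ) + 1 - ν with hB
  set p := 2 * μ + ν + (M : ℝ) - 3 with hp
  set q := 2 * μ + 2 * ν - 5 with hq
  have hpq : p - 2 * B + A = q := by rw [hp, hB, hA, hq]; ring
  set F := fun z : ℝ => z ^ p * (besselK B z) ^ 2 / besselK A z with hF
  have hΓA : 0 < Real.Gamma A := Real.Gamma_pos_of_pos hA0
  have hΓB : 0 < Real.Gamma B := Real.Gamma_pos_of_pos hB0
  have hTB1 : 0 < T B 1 := tail_pos hB0 one_pos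
  have hTA1 : 0 < T A 1 := tail_pos hA0 one_pos
  have hFm : Measurable F := by
    rw [hF]
    exact ((measurable_id.pow measurable_const).mul
      ((besselK_measurable B).pow measurable_const)).div (besselK_measurable A)
  have hFnn : ∀ z ∈ Ioi (0:ℝ), 0 ≤ F z := by
    intro z hz
    have hz0 : (0:ℝ) < z := hz
    have hKA := besselK_pos hA0 hz0
    exact div_nonneg (mul_nonneg (Real.rpow_nonneg hz0.le _) (sq_nonneg _)) hKA.le
  -- lower bound near 0
  have hlow : ∀ z ∈ Ioo (0:ℝ) 1,
      (T B 1 / 2) ^ 2 / (2 ^ A * Real.Gamma A) * z ^ q ≤ F z := by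
    intro z hz
    have hz0 : (0:ℝ) < z := hz.1
    have hz1 : z ≤ 1 := hz.2.le
    have hKB := besselK_lower0 hB0 hz0 hz1
    have hKA := besselK_upper0 hA0 hz0
    have hKA0 := besselK_pos hA0 hz0
    have hKBnn : (0:ℝ) ≤ T B 1 / 2 * z ^ (-B) := by positivity
    have hnum : z ^ p * (T B 1 / 2 * z ^ (-B)) ^ 2 ≤ z ^ p * (besselK B z) ^ 2 :=
      mul_le_mul_of_nonneg_left (pow_le_pow_left₀ hKBnn hKB 2) (Real.rpow_nonneg hz0.le _)
    have hdiv : z ^ p * (T B 1 / 2 * z ^ (-B)) ^ 2 / (2 ^ A * Real.Gamma A * z ^ (-A)) ≤ F z :=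
      div_le_div₀ (mul_nonneg (Real.rpow_nonneg hz0.le _) (sq_nonneg _)) hnum hKA0 hKA
    refine le_trans (le_of_eq ?_) hdiv
    rw [← hpq, ← rpow_arith hz0 p B A]
    have hzA : z ^ (-A) ≠ 0 := (Real.rpow_pos_of_pos hz0 _).ne'
    have hzB : z ^ (-B) ≠ 0 := (Real.rpow_pos_of_pos hz0 _).ne'
    have h2A : (2:ℝ) ^ A ≠ 0 := (Real.rpow_pos_of_pos two_pos _).ne'
    field_simp
  -- upper bound near 0
  have hup0 : ∀ z ∈ Ioc (0:ℝ) 1,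
      F z ≤ (2 ^ B * Real.Gamma B) ^ 2 / (T A 1 / 2) * z ^ q := by
    intro z hz
    have hz0 : (0:ℝ) < z := hz.1
    have hz1 : z ≤ 1 := hz.2
    have hKB := besselK_upper0 hB0 hz0
    have hKA := besselK_lower0 hA0 hz0 hz1
    have hKAlb : (0:ℝ) < T A 1 / 2 * z ^ (-A) := by positivity
    have hKBnn : (0:ℝ) ≤ besselK B z := besselK_nonneg hB0 hz0
    have hnum : z ^ p * (besselK B z) ^ 2 ≤ z ^ p * (2 ^ B * Real.Gamma B * z ^ (-B)) ^ 2 :=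
      mul_le_mul_of_nonneg_left (pow_le_pow_left₀ hKBnn hKB 2) (Real.rpow_nonneg hz0.le _)
    have hdiv : F z ≤ z ^ p * (2 ^ B * Real.Gamma B * z ^ (-B)) ^ 2 / (T A 1 / 2 * z ^ (-A)) :=
      div_le_div₀ (mul_nonneg (Real.rpow_nonneg hz0.le _) (sq_nonneg _)) hnum hKAlb hKA
    refine le_trans hdiv (le_of_eq ?_)
    rw [← hpq, ← rpow_arith hz0 p B A]
    have hzA : z ^ (-A) ≠ 0 := (Real.rpow_pos_of_pos hz0 _).ne'
    have hzB : z ^ (-B) ≠ 0 := (Real.rpow_pos_of_pos hz0 _).ne'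
    have h2B : (2:ℝ) ^ B ≠ 0 := (Real.rpow_pos_of_pos two_pos _).ne'
    field_simp
  constructor
  · -- integrable → μ + ν > 2
    intro h
    set d := (T B 1 / 2) ^ 2 / (2 ^ A * Real.Gamma A) with hd
    have h2A : (0:ℝ) < 2 ^ A := Real.rpow_pos_of_pos two_pos _
    have hd0 : 0 < d := by positivity
    have hmeas : AEStronglyMeasurable (fun z : ℝ => d * z ^ q)
        (volume.restrict (Ioo (0:ℝ) 1)) :=
      (measurable_const.mul (measurable_id.pow measurable_const)).aestronglyMeasurable
    have hd_int : IntegrableOn (fun z : ℝ => d * z ^ q) (Ioo (0:ℝ) 1) := by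
      apply Integrable.mono (h.mono_set (fun x hx => hx.1)) hmeas
      filter_upwards [ae_restrict_mem measurableSet_Ioo] with z hz
      rw [Real.norm_eq_abs, Real.norm_eq_abs, abs_of_nonneg (mul_nonneg hd0.le (Real.rpow_nonneg hz.1.le _)),
        abs_of_nonneg (hFnn z hz.1)]
      exact hlow z hz
    have hint : IntegrableOn (fun z : ℝ => z ^ q) (Ioo (0:ℝ) 1) := by
      have h2 := hd_int.const_mul d⁻¹
      refine IntegrableOn.congr_fun h2 (fun z _ => ?_) measurableSet_Ioo
      field_simp
    rw [intervalIntegral.integrableOn_Ioo_rpow_iff one_pos] at hint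
    have : q = 2 * μ + 2 * ν - 5 := hq
    simp only [gt_iff_lt]
    linarith
  · -- μ + ν > 2 → integrable
    intro h
    have hq1 : (-1:ℝ) < q := by rw [hq]; linarith
    have part1 : IntegrableOn F (Ioc (0:ℝ) 1) := by
      have hg : IntegrableOn (fun z : ℝ => (2 ^ B * Real.Gamma B) ^ 2 / (T A 1 / 2) * z ^ q)
          (Ioc (0:ℝ) 1) := by
        rw [integrableOn_Ioc_iff_integrableOn_Ioo]
        exact ((intervalIntegral.integrableOn_Ioo_rpow_iff one_pos).mpr hq1).const_mul _
      apply Integrable.mono' hg hFm.aestronglyMeasurable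
      filter_upwards [ae_restrict_mem measurableSet_Ioc] with z hz
      rw [Real.norm_eq_abs, abs_of_nonneg (hFnn z hz.1)]
      exact hup0 z hz
    have part2 : IntegrableOn F (Ioi (1:ℝ)) := by
      set s := max (p + 2) 1 with hs
      have hs0 : (0:ℝ) < s := lt_of_lt_of_le one_pos (le_max_right _ _)
      set c1 := min 1 (2 ^ (A - 1)) * Real.exp (-1:ℝ) / 2 with hc1
      have hc10 : 0 < c1 := by
        rw [hc1]
        have : (0:ℝ) < min 1 (2 ^ (A - 1)) := lt_min one_pos (Real.rpow_pos_of_pos two_pos _)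
        positivity
      set E := (CB B) ^ 2 / c1 with hE
      have hE0 : 0 ≤ E := by positivity
      have hg : IntegrableOn (fun z : ℝ => E * (Real.exp (-z) * z ^ (s - 1))) (Ioi 1) :=
        ((Real.GammaIntegral_convergent hs0).mono_set (Ioi_subset_Ioi zero_le_one)).const_mul E
      apply Integrable.mono' hg hFm.aestronglyMeasurable
      filter_upwards [ae_restrict_mem measurableSet_Ioi] with z hz
      have hz1 : (1:ℝ) ≤ z := le_of_lt hz
      have hz0 : (0:ℝ) < z := lt_of_lt_of_le one_pos hz1
      rw [Real.norm_eq_abs, abs_of_nonneg (hFnn z hz0)]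
      have hKB := besselK_upper1 hB0 hz1
      have hKA := besselK_lower1 hA0 hz1
      have hKAlb : (0:ℝ) < c1 * (z⁻¹ * Real.exp (-z)) := by positivity
      have hKBnn : (0:ℝ) ≤ besselK B z := besselK_nonneg hB0 hz0
      have hnum : z ^ p * (besselK B z) ^ 2 ≤ z ^ p * (CB B * Real.exp (-z)) ^ 2 :=
        mul_le_mul_of_nonneg_left (pow_le_pow_left₀ hKBnn hKB 2) (Real.rpow_nonneg hz0.le _)
      have hdiv : F z ≤ z ^ p * (CB B * Real.exp (-z)) ^ 2 / (c1 * (z⁻¹ * Real.exp (-z))) :=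
        div_le_div₀ (mul_nonneg (Real.rpow_nonneg hz0.le _) (sq_nonneg _)) hnum hKAlb hKA
      refine le_trans hdiv ?_
      have hmid : z ^ p * (CB B * Real.exp (-z)) ^ 2 / (c1 * (z⁻¹ * Real.exp (-z)))
          = E * (Real.exp (-z) * z ^ (p + 1)) := by
        rw [hE, Real.rpow_add_one hz0.ne' p]
        have hex : Real.exp (-z) ≠ 0 := (Real.exp_pos _).ne'
        field_simp
      rw [hmid]
      have hzz : z ^ (p + 1) ≤ z ^ (s - 1) :=
        Real.rpow_le_rpow_of_exponent_le hz1 (by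
          have := le_max_left (p + 2) 1
          linarith [le_max_left (p + 2) (1:ℝ)])
      exact mul_le_mul_of_nonneg_left
        (mul_le_mul_of_nonneg_left hzz (Real.exp_pos _).le) hE0
    have hunion := part1.union part2
    rwa [Ioc_union_Ioi_eq_Ioi zero_le_one] at hunion
end
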